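/- Let Z ≥ 1 be a random variable with law concentrated on [1,∞), and suppose there exists a Radon measure t on [0,∞) such that E[e^{-sZ}] = 1 - exp(-∫_{[0,∞)} e^{-s(1+x)}/(1+x) t(dx)) for all s > 0. Define the Radon measure m on [1,∞) by m(A) = ∫_{[0,∞)} 1_{1+x ∈ A}/(1+x) t(dx), and its k-fold convolution m^{(k)} (supported on [k,∞)). Then the law of Z restricted to any bounded Borel set A equals Σ_{k=1}^∞ ((-1)^{k+1}/k!) m^{(k)}(A), where the sum is finite since m^{(k)} is supported on [k,∞). -/

import Mathlib

open MeasureTheory Real Set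

/-- Convolution of two measures on `ℝ`. -/
noncomputable def mconv (μ ν : Measure ℝ) : Measure ℝ :=
  Measure.map (fun p : ℝ × ℝ => p.1 + p.2) (μ.prod ν)

/-- `itconv m k` is the `(k+1)`-fold convolution `m^{(k+1)}` of `m` with itself. -/
noncomputable def itconv (m : Measure ℝ) : ℕ → Measure ℝ
  | 0 => m
  | (k + 1) => mconv (itconv m k) m

open scoped ENNReal
set_option maxHeartbeats 1000000

lemma measurable_madd : Measurable (fun p : ℝ × ℝ => p.1 + p.2) :=
  measurable_fst.add measurable_snd

instance mconv_sfinite (μ ν : Measure ℝ) [SFinite μ] [SFinite ν] : SFinite (mconv μ ν) := by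
  unfold mconv; infer_instance

lemma itconv_sfinite (m : Measure ℝ) [SFinite m] (k : ℕ) : SFinite (itconv m k) := by
  induction k with
  | zero => rw [itconv]; infer_instance
  | succ k ih => rw [itconv]; exact @mconv_sfinite _ _ ih _

lemma mconv_null {μ ν : Measure ℝ} [SFinite ν] {a b : ℝ} (hμ : μ (Set.Iio a) = 0)
    (hν : ν (Set.Iio b) = 0) : mconv μ ν (Set.Iio (a + b)) = 0 := by
  rw [mconv, Measure.map_apply measurable_madd measurableSet_Iio]
  have hsub : (fun p : ℝ × ℝ => p.1 + p.2) ⁻¹' (Set.Iio (a + b))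
      ⊆ (Set.Iio a ×ˢ Set.univ) ∪ (Set.univ ×ˢ Set.Iio b) := by
    rintro ⟨x, y⟩ h
    simp only [Set.mem_preimage, Set.mem_Iio] at h
    by_cases hx : x < a
    · exact Or.inl ⟨hx, trivial⟩
    · exact Or.inr ⟨trivial, show y < b by push_neg at hx; linarith⟩
  refine le_antisymm ?_ zero_le
  calc (μ.prod ν) _ ≤ (μ.prod ν) ((Set.Iio a ×ˢ Set.univ) ∪ (Set.univ ×ˢ Set.Iio b)) :=
        measure_mono hsub
    _ ≤ (μ.prod ν) (Set.Iio a ×ˢ Set.univ) + (μ.prod ν) (Set.univ ×ˢ Set.Iio b) :=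
        measure_union_le _ _
    _ = 0 := by rw [Measure.prod_prod, Measure.prod_prod, hμ, hν, zero_mul, mul_zero, add_zero]

lemma mconv_mono_bound {μ ν : Measure ℝ} [SFinite ν] {c : ℝ} (hμ : μ (Set.Iio 0) = 0)
    (hν : ν (Set.Iio 0) = 0) : mconv μ ν (Set.Iio c) ≤ μ (Set.Iio c) * ν (Set.Iio c) := by
  rw [mconv, Measure.map_apply measurable_madd measurableSet_Iio]
  have hsub : (fun p : ℝ × ℝ => p.1 + p.2) ⁻¹' (Set.Iio c)
      ⊆ (Set.Iio c ×ˢ Set.Iio c) ∪ ((Set.Iio 0 ×ˢ Set.univ) ∪ (Set.univ ×ˢ Set.Iio 0)) := by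
    rintro ⟨x, y⟩ h
    simp only [Set.mem_preimage, Set.mem_Iio] at h
    by_cases hx : x < 0
    · exact Or.inr (Or.inl ⟨hx, trivial⟩)
    · by_cases hy : y < 0
      · exact Or.inr (Or.inr ⟨trivial, hy⟩)
      · push_neg at hx hy
        exact Or.inl ⟨show x < c by linarith, show y < c by linarith⟩
  calc (μ.prod ν) _ ≤ (μ.prod ν) ((Set.Iio c ×ˢ Set.Iio c) ∪ ((Set.Iio 0 ×ˢ Set.univ) ∪ (Set.univ ×ˢ Set.Iio 0))) :=
        measure_mono hsub
    _ ≤ (μ.prod ν) (Set.Iio c ×ˢ Set.Iio c) + ((μ.prod ν) (Set.Iio 0 ×ˢ Set.univ) + (μ.prod ν) (Set.univ ×ˢ Set.Iio 0)) := by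
        exact le_trans (measure_union_le _ _) (by gcongr; exact measure_union_le _ _)
    _ = μ (Set.Iio c) * ν (Set.Iio c) := by
        rw [Measure.prod_prod, Measure.prod_prod, Measure.prod_prod, hμ, hν,
          zero_mul, mul_zero, add_zero, add_zero]

lemma mconv_laplace {μ ν : Measure ℝ} [SFinite ν] (s : ℝ) :
    ∫⁻ x, ENNReal.ofReal (Real.exp (-s * x)) ∂(mconv μ ν)
      = (∫⁻ x, ENNReal.ofReal (Real.exp (-s * x)) ∂μ)
        * (∫⁻ x, ENNReal.ofReal (Real.exp (-s * x)) ∂ν) := by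
  have hm : Measurable fun x : ℝ => ENNReal.ofReal (Real.exp (-s * x)) :=
    ((measurable_const.mul measurable_id).exp).ennreal_ofReal
  rw [mconv, lintegral_map hm measurable_madd]
  have : ∀ p : ℝ × ℝ, ENNReal.ofReal (Real.exp (-s * (p.1 + p.2)))
      = ENNReal.ofReal (Real.exp (-s * p.1)) * ENNReal.ofReal (Real.exp (-s * p.2)) := by
    intro p
    rw [← ENNReal.ofReal_mul (Real.exp_nonneg _), ← Real.exp_add]
    ring_nf
  calc ∫⁻ p : ℝ × ℝ, ENNReal.ofReal (Real.exp (-s * (p.1 + p.2))) ∂(μ.prod ν)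
      = ∫⁻ p : ℝ × ℝ, ENNReal.ofReal (Real.exp (-s * p.1)) * ENNReal.ofReal (Real.exp (-s * p.2)) ∂(μ.prod ν) := by
        simp_rw [this]
    _ = ∫⁻ x, ∫⁻ y, ENNReal.ofReal (Real.exp (-s * x)) * ENNReal.ofReal (Real.exp (-s * y)) ∂ν ∂μ := by
        exact lintegral_prod _ ((hm.comp measurable_fst).mul (hm.comp measurable_snd)).aemeasurable
    _ = ∫⁻ x, ENNReal.ofReal (Real.exp (-s * x)) * ∫⁻ y, ENNReal.ofReal (Real.exp (-s * y)) ∂ν ∂μ := by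
        congr 1; ext x; exact lintegral_const_mul _ hm
    _ = _ := lintegral_mul_const'' _ hm.aemeasurable

lemma itconv_null {m : Measure ℝ} [SFinite m] (hm1 : m (Set.Iio 1) = 0) (k : ℕ) :
    itconv m k (Set.Iio ((k : ℝ) + 1)) = 0 := by
  induction k with
  | zero => rw [itconv]; simpa using hm1
  | succ k ih =>
    rw [itconv]
    have := itconv_sfinite m k
    have h := mconv_null (a := (k : ℝ) + 1) (b := 1) ih hm1
    convert h using 2
    push_cast; ring

lemma itconv_null_zero {m : Measure ℝ} [SFinite m] (hm1 : m (Set.Iio 1) = 0) (k : ℕ) :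
    itconv m k (Set.Iio 0) = 0 :=
  measure_mono_null (Set.Iio_subset_Iio (by positivity)) (itconv_null hm1 k)

lemma itconv_bound {m : Measure ℝ} [SFinite m] (hm1 : m (Set.Iio 1) = 0) (k : ℕ) (c : ℝ) :
    itconv m k (Set.Iio c) ≤ m (Set.Iio c) ^ (k + 1) := by
  have hm0 : m (Set.Iio 0) = 0 := measure_mono_null (Set.Iio_subset_Iio (by norm_num)) hm1
  induction k with
  | zero => rw [itconv, pow_one]
  | succ k ih =>
    rw [itconv]
    calc mconv (itconv m k) m (Set.Iio c) ≤ itconv m k (Set.Iio c) * m (Set.Iio c) :=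
          mconv_mono_bound (itconv_null_zero hm1 k) hm0
      _ ≤ m (Set.Iio c) ^ (k + 1) * m (Set.Iio c) := by gcongr
      _ = m (Set.Iio c) ^ (k + 1 + 1) := (pow_succ _ _).symm

lemma itconv_laplace {m : Measure ℝ} [SFinite m] (k : ℕ) (s : ℝ) :
    ∫⁻ x, ENNReal.ofReal (Real.exp (-s * x)) ∂(itconv m k)
      = (∫⁻ x, ENNReal.ofReal (Real.exp (-s * x)) ∂m) ^ (k + 1) := by
  induction k with
  | zero => rw [itconv, pow_one]
  | succ k ih =>
    have := itconv_sfinite m k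
    rw [itconv, mconv_laplace, ih]; ring
noncomputable abbrev Kc : Set ℝ := Set.Icc (0:ℝ) 1

lemma integral_eq_of_poly (Q₁ Q₂ : Measure Kc) [IsFiniteMeasure Q₁] [IsFiniteMeasure Q₂]
    (key : ∀ n : ℕ, ∫ k : Kc, (k : ℝ) ^ n ∂Q₁ = ∫ k : Kc, (k : ℝ) ^ n ∂Q₂)
    (g : C(Kc, ℝ)) : ∫ k, g k ∂Q₁ = ∫ k, g k ∂Q₂ := by
  have hcont : ∀ (Q : Measure Kc), IsFiniteMeasure Q →
      Continuous (fun g : C(Kc, ℝ) => ∫ k, g k ∂Q) := by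
    intro Q hπ
    apply (lipschitzWith_iff_dist_le_mul (K := measureUnivNNReal Q)).2 ?_ |>.continuous
    intro g₁ g₂
    have hint : ∀ g : C(Kc, ℝ), Integrable (fun k => g k) Q := fun g =>
      g.continuous.integrable_of_hasCompactSupport (HasCompactSupport.of_compactSpace _)
    rw [dist_eq_norm, ← integral_sub (hint g₁) (hint g₂), mul_comm]
    apply norm_integral_le_of_norm_le_const
    filter_upwards with k
    calc ‖g₁ k - g₂ k‖ = ‖(g₁ - g₂) k‖ := by simp
      _ ≤ ‖g₁ - g₂‖ := (g₁ - g₂).norm_coe_le_norm k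
      _ = dist g₁ g₂ := (dist_eq_norm g₁ g₂).symm
  have hS : IsClosed {g : C(Kc, ℝ) | ∫ k, g k ∂Q₁ = ∫ k, g k ∂Q₂} :=
    isClosed_eq (hcont Q₁ inferInstance) (hcont Q₂ inferInstance)
  have hpoly : (polynomialFunctions Kc : Set C(Kc, ℝ)) ⊆
      {g : C(Kc, ℝ) | ∫ k, g k ∂Q₁ = ∫ k, g k ∂Q₂} := by
    intro g hg
    rw [polynomialFunctions_coe] at hg
    obtain ⟨p, rfl⟩ := hg
    show (∫ k, Polynomial.eval (k : ℝ) p ∂Q₁) = ∫ k, Polynomial.eval (k : ℝ) p ∂Q₂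
    have hint : ∀ (Q : Measure Kc) (n : ℕ), IsFiniteMeasure Q →
        Integrable (fun k : Kc => p.coeff n * (k : ℝ) ^ n) Q := by
      intro Q n hQ
      exact ((continuous_const.mul ((continuous_subtype_val).pow n)).integrable_of_hasCompactSupport
        (HasCompactSupport.of_compactSpace _))
    simp only [Polynomial.eval_eq_sum_range]
    rw [integral_finset_sum _ (fun n _ => hint Q₁ n inferInstance),
      integral_finset_sum _ (fun n _ => hint Q₂ n inferInstance)]
    refine Finset.sum_congr rfl fun n _ => ?_
    rw [integral_const_mul, integral_const_mul, key n]
  have hmem : g ∈ closure (polynomialFunctions Kc : Set C(Kc, ℝ)) := by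
    rw [← Subalgebra.topologicalClosure_coe, polynomialFunctions.topologicalClosure]
    trivial
  exact closure_minimal hpoly hS hmem

lemma laplace_unique (ν₁ ν₂ : Measure ℝ)
    (h₁ : ν₁ (Set.Iio 0) = 0) (h₂ : ν₂ (Set.Iio 0) = 0)
    (hL : ∀ s : ℝ, 0 < s → ∫⁻ x, ENNReal.ofReal (Real.exp (-s * x)) ∂ν₁
      = ∫⁻ x, ENNReal.ofReal (Real.exp (-s * x)) ∂ν₂)
    (hfin : ∀ s : ℝ, 0 < s → ∫⁻ x, ENNReal.ofReal (Real.exp (-s * x)) ∂ν₁ ≠ ⊤) :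
    ν₁ = ν₂ := by
  set d : ℝ → ENNReal := fun x => ENNReal.ofReal (Real.exp (-x)) with hd
  have hdm : Measurable d := (measurable_id.neg.exp).ennreal_ofReal
  set ρ₁ := ν₁.withDensity d with hρ₁
  set ρ₂ := ν₂.withDensity d with hρ₂
  -- basic Laplace identity for each n
  have hwd : ∀ (ν : Measure ℝ) (n : ℕ),
      ∫⁻ x, ENNReal.ofReal (Real.exp (-x)) ^ n ∂(ν.withDensity d)
        = ∫⁻ x, ENNReal.ofReal (Real.exp (-(n + 1 : ℝ) * x)) ∂ν := by
    intro ν n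
    have hgm : Measurable fun x : ℝ => ENNReal.ofReal (Real.exp (-x)) ^ n := hdm.pow_const n
    rw [lintegral_withDensity_eq_lintegral_mul _ hdm hgm]
    congr 1
    ext x
    simp only [Pi.mul_apply, hd]
    rw [← ENNReal.ofReal_pow (Real.exp_nonneg _), ← ENNReal.ofReal_mul (Real.exp_nonneg _),
      ← Real.exp_nat_mul, ← Real.exp_add]
    ring_nf
  have hmass : ∀ s, 0 < s → ∫⁻ x, ENNReal.ofReal (Real.exp (-s * x)) ∂ν₂ ≠ ⊤ := by
    intro s hs; rw [← hL s hs]; exact hfin s hs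
  have hfin₁ : IsFiniteMeasure ρ₁ := by
    constructor
    rw [hρ₁, withDensity_apply _ MeasurableSet.univ, Measure.restrict_univ]
    have := hfin 1 one_pos
    simp only [neg_mul, one_mul] at this ⊢
    exact lt_top_iff_ne_top.2 this
  have hfin₂ : IsFiniteMeasure ρ₂ := by
    constructor
    rw [hρ₂, withDensity_apply _ MeasurableSet.univ, Measure.restrict_univ]
    have := hmass 1 one_pos
    simp only [neg_mul, one_mul] at this ⊢
    exact lt_top_iff_ne_top.2 this
  set φ : ℝ → Kc := fun x => Set.projIcc 0 1 zero_le_one (Real.exp (-x)) with hφ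
  have hφc : Continuous φ := continuous_projIcc.comp (Real.continuous_exp.comp continuous_neg)
  have hφm : Measurable φ := hφc.measurable
  set Q₁ : Measure Kc := ρ₁.map φ with hQ₁
  set Q₂ : Measure Kc := ρ₂.map φ with hQ₂
  have hQf₁ : IsFiniteMeasure Q₁ := by rw [hQ₁]; infer_instance
  have hQf₂ : IsFiniteMeasure Q₂ := by rw [hQ₂]; infer_instance
  -- a.e. nonneg
  have hae : ∀ (ν : Measure ℝ), ν (Set.Iio 0) = 0 → ∀ᵐ x ∂(ν.withDensity d), 0 ≤ x := by
    intro ν hν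
    have hν' : ∀ᵐ x ∂ν, 0 ≤ x := by
      rw [ae_iff]
      convert hν using 2
      ext x; simp [Set.mem_Iio, not_le]
    exact (withDensity_absolutelyContinuous ν d).ae_le hν'
  have hae₁ := hae ν₁ h₁
  have hae₂ := hae ν₂ h₂
  rw [← hρ₁] at hae₁
  rw [← hρ₂] at hae₂
  -- coercion of φ equals exp(-x) for x ≥ 0
  have hφcoe : ∀ x : ℝ, 0 ≤ x → ((φ x : ℝ)) = Real.exp (-x) := by
    intro x hx
    rw [hφ]
    simp only
    rw [Set.projIcc_of_mem]
    exact ⟨Real.exp_nonneg _, Real.exp_le_one_iff.2 (by linarith)⟩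
  -- moments agree
  have key : ∀ n : ℕ, ∫ k : Kc, (k : ℝ) ^ n ∂Q₁ = ∫ k : Kc, (k : ℝ) ^ n ∂Q₂ := by
    intro n
    have hnn : ∀ (Q : Measure Kc), 0 ≤ᵐ[Q] fun k : Kc => (k : ℝ) ^ n := by
      intro Q; filter_upwards with k; exact pow_nonneg k.2.1 n
    have hsm : ∀ (Q : Measure Kc), AEStronglyMeasurable (fun k : Kc => (k : ℝ) ^ n) Q :=
      fun Q => ((continuous_subtype_val.pow n)).aestronglyMeasurable
    rw [integral_eq_lintegral_of_nonneg_ae (hnn Q₁) (hsm Q₁),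
      integral_eq_lintegral_of_nonneg_ae (hnn Q₂) (hsm Q₂)]
    congr 1
    have hlm : Measurable fun k : Kc => ENNReal.ofReal ((k : ℝ) ^ n) :=
      ((continuous_subtype_val.pow n)).measurable.ennreal_ofReal
    rw [hQ₁, hQ₂, lintegral_map hlm hφm, lintegral_map hlm hφm]
    have e₁ : ∫⁻ x, ENNReal.ofReal ((φ x : ℝ) ^ n) ∂ρ₁
        = ∫⁻ x, ENNReal.ofReal (Real.exp (-x)) ^ n ∂ρ₁ := by
      apply lintegral_congr_ae
      filter_upwards [hae₁] with x hx
      rw [hφcoe x hx, ENNReal.ofReal_pow (Real.exp_nonneg _)]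
    have e₂ : ∫⁻ x, ENNReal.ofReal ((φ x : ℝ) ^ n) ∂ρ₂
        = ∫⁻ x, ENNReal.ofReal (Real.exp (-x)) ^ n ∂ρ₂ := by
      apply lintegral_congr_ae
      filter_upwards [hae₂] with x hx
      rw [hφcoe x hx, ENNReal.ofReal_pow (Real.exp_nonneg _)]
    rw [e₁, e₂, hρ₁, hρ₂, hwd ν₁ n, hwd ν₂ n]
    exact hL (n + 1) (by positivity)
  -- equality of pushforwards
  have hQeq : Q₁ = Q₂ := by
    apply ext_of_forall_lintegral_eq_of_IsFiniteMeasure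
    intro f
    have h₁' := BoundedContinuousFunction.lintegral_lt_top_of_nnreal Q₁ f
    have h₂' := BoundedContinuousFunction.lintegral_lt_top_of_nnreal Q₂ f
    rw [← ENNReal.toReal_eq_toReal_iff' h₁'.ne h₂'.ne,
      BoundedContinuousFunction.toReal_lintegral_coe_eq_integral,
      BoundedContinuousFunction.toReal_lintegral_coe_eq_integral]
    exact integral_eq_of_poly Q₁ Q₂ key ⟨fun k => (f k : ℝ), by continuity⟩
  -- recover ρ from Q
  have hinv : ∀ (ν : Measure ℝ), ν (Set.Iio 0) = 0 →
      ((ν.withDensity d).map φ).map (fun k : Kc => -Real.log (k : ℝ)) = ν.withDensity d := by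
    intro ν hν
    have hlogm : Measurable fun k : Kc => -Real.log (k : ℝ) :=
      (Real.measurable_log.comp measurable_subtype_coe).neg
    rw [Measure.map_map hlogm hφm]
    have : (fun k : Kc => -Real.log (k : ℝ)) ∘ φ =ᵐ[ν.withDensity d] id := by
      filter_upwards [hae ν hν] with x hx
      simp only [Function.comp_apply, id_eq]
      rw [hφcoe x hx, Real.log_exp]
      ring
    rw [Measure.map_congr this, Measure.map_id]
  have hρeq : ρ₁ = ρ₂ := by
    rw [hρ₁, hρ₂, ← hinv ν₁ h₁, ← hinv ν₂ h₂, ← hρ₁, ← hρ₂, ← hQ₁, ← hQ₂, hQeq]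
  -- recover ν from ρ
  have hrec : ∀ (ν : Measure ℝ),
      (ν.withDensity d).withDensity (fun x => ENNReal.ofReal (Real.exp x)) = ν := by
    intro ν
    have hem : Measurable fun x : ℝ => ENNReal.ofReal (Real.exp x) :=
      Real.measurable_exp.ennreal_ofReal
    rw [← withDensity_mul ν hdm hem]
    have : (d * fun x => ENNReal.ofReal (Real.exp x)) = 1 := by
      ext x
      simp only [Pi.mul_apply, hd, Pi.one_apply]
      rw [← ENNReal.ofReal_mul (Real.exp_nonneg _), ← Real.exp_add]
      simp
    rw [this, withDensity_one]
  rw [← hrec ν₁, ← hrec ν₂, ← hρ₁, ← hρ₂, hρeq]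


lemma even_inj : Function.Injective (fun j : ℕ => 2 * j) := fun a b h => by simp only [] at h; omega
lemma odd_inj : Function.Injective (fun j : ℕ => 2 * j + 1) := fun a b h => by simp only [] at h; omega
lemma even2_inj : Function.Injective (fun j : ℕ => 2 * j + 2) := fun a b h => by simp only [] at h; omega

lemma sum_even (r : ℝ) : Summable fun j : ℕ => r ^ (2 * j) / ((2 * j).factorial : ℝ) :=
  (Real.summable_pow_div_factorial r).comp_injective even_inj
lemma sum_odd (r : ℝ) : Summable fun j : ℕ => r ^ (2 * j + 1) / ((2 * j + 1).factorial : ℝ) :=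
  (Real.summable_pow_div_factorial r).comp_injective odd_inj
lemma sum_even2 (r : ℝ) : Summable fun j : ℕ => r ^ (2 * j + 2) / ((2 * j + 2).factorial : ℝ) :=
  (Real.summable_pow_div_factorial r).comp_injective even2_inj

lemma exp_series_split (r : ℝ) :
    (1 - Real.exp (-r)) + ∑' j : ℕ, r ^ (2 * j + 2) / ((2 * j + 2).factorial : ℝ)
      = ∑' j : ℕ, r ^ (2 * j + 1) / ((2 * j + 1).factorial : ℝ) := by
  have hexp : Real.exp (-r) = ∑' n : ℕ, (-r) ^ n / (n.factorial : ℝ) := by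
    rw [Real.exp_eq_exp_ℝ, NormedSpace.exp_eq_tsum_div]
  have hge : Summable fun j : ℕ => (-r) ^ (2 * j) / ((2 * j).factorial : ℝ) :=
    (Real.summable_pow_div_factorial (-r)).comp_injective even_inj
  have hgo : Summable fun j : ℕ => (-r) ^ (2 * j + 1) / ((2 * j + 1).factorial : ℝ) :=
    (Real.summable_pow_div_factorial (-r)).comp_injective odd_inj
  have hsplit := tsum_even_add_odd (f := fun n : ℕ => (-r) ^ n / (n.factorial : ℝ)) hge hgo
  have he : ∑' j : ℕ, (-r) ^ (2 * j) / ((2 * j).factorial : ℝ)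
      = 1 + ∑' j : ℕ, r ^ (2 * j + 2) / ((2 * j + 2).factorial : ℝ) := by
    have h1 : ∀ j : ℕ, (-r) ^ (2 * j) / ((2 * j).factorial : ℝ)
        = r ^ (2 * j) / ((2 * j).factorial : ℝ) := fun j => by
      rw [Even.neg_pow (even_two_mul j)]
    simp_rw [h1]
    rw [Summable.tsum_eq_zero_add (sum_even r)]
    have h0 : r ^ (2 * 0) / (((2 * 0 : ℕ)).factorial : ℝ) = 1 := by norm_num
    rw [h0]
    congr 1
  have ho : ∑' j : ℕ, (-r) ^ (2 * j + 1) / ((2 * j + 1).factorial : ℝ)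
      = -∑' j : ℕ, r ^ (2 * j + 1) / ((2 * j + 1).factorial : ℝ) := by
    rw [← tsum_neg]
    apply tsum_congr; intro j
    rw [Odd.neg_pow ⟨j, by ring⟩, neg_div]
  rw [he, ho] at hsplit
  rw [hexp, ← hsplit]
  ring

lemma term_ofReal (r : ℝ) (hr : 0 ≤ r) (k : ℕ) :
    ((k.factorial : ℝ≥0∞))⁻¹ * ENNReal.ofReal r ^ k
      = ENNReal.ofReal (r ^ k / (k.factorial : ℝ)) := by
  rw [← ENNReal.ofReal_pow hr, ← ENNReal.ofReal_natCast k.factorial,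
    ← ENNReal.ofReal_inv_of_pos (by exact_mod_cast k.factorial_pos),
    ← ENNReal.ofReal_mul (by positivity)]
  congr 1
  rw [inv_mul_eq_div]


/-- The law of `Z` equals the alternating series `Σ_{k≥1} ((-1)^{k+1}/k!) m^{(k)}` on bounded
Borel sets, where `m(A) = ∫ 1_{1+x∈A}/(1+x) t(dx)`. -/
theorem stmt8 {Ω : Type*} [MeasurableSpace Ω] (μ : Measure Ω) [IsProbabilityMeasure μ]
    (Z : Ω → ℝ) (hZm : Measurable Z) (hZ1 : ∀ᵐ ω ∂μ, 1 ≤ Z ω)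
    (t : Measure ℝ) [IsLocallyFiniteMeasure t] (ht : t (Set.Iio 0) = 0)
    (hfin : ∀ s : ℝ, 0 < s →
      (∫⁻ x in Set.Ici (0 : ℝ), ENNReal.ofReal (Real.exp (-s * (1 + x)) / (1 + x)) ∂t) ≠ ⊤)
    (hlap : ∀ s : ℝ, 0 < s →
      ∫ ω, Real.exp (-s * Z ω) ∂μ
        = 1 - Real.exp
            (-(∫⁻ x in Set.Ici (0 : ℝ),
                ENNReal.ofReal (Real.exp (-s * (1 + x)) / (1 + x)) ∂t).toReal))
    (m : Measure ℝ)
    (hm : m = Measure.map (fun x => 1 + x)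
        (t.withDensity (fun x => ENNReal.ofReal (1 / (1 + x)))))
    (A : Set ℝ) (hA : MeasurableSet A) (hAbdd : Bornology.IsBounded A) :
    ((Measure.map Z μ) A).toReal
      = ∑' k : ℕ, ((-1 : ℝ) ^ k / (Nat.factorial (k + 1) : ℝ)) * ((itconv m k) A).toReal := by
  have hwm : Measurable fun x : ℝ => ENNReal.ofReal (1 / (1 + x)) :=
    ((measurable_const.add measurable_id).const_div 1|>.ennreal_ofReal)
  have haddm : Measurable fun x : ℝ => 1 + x := measurable_const.add measurable_id
  haveI hsf : SFinite m := by rw [hm]; infer_instance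
  have hexpm : ∀ s : ℝ, Measurable fun x : ℝ => ENNReal.ofReal (Real.exp (-s * x)) :=
    fun s => ((measurable_const.mul measurable_id).exp).ennreal_ofReal
  -- Step A: Laplace transform of m
  have hℓ : ∀ s : ℝ, 0 < s → ∫⁻ x, ENNReal.ofReal (Real.exp (-s * x)) ∂m
      = ∫⁻ x in Set.Ici (0 : ℝ), ENNReal.ofReal (Real.exp (-s * (1 + x)) / (1 + x)) ∂t := by
    intro s hs
    have hgm : Measurable fun x : ℝ => ENNReal.ofReal (Real.exp (-s * (1 + x))) :=
      ((measurable_const.mul haddm).exp).ennreal_ofReal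
    rw [hm, lintegral_map (hexpm s) haddm,
      lintegral_withDensity_eq_lintegral_mul t hwm hgm]
    simp only [Pi.mul_apply]
    rw [← lintegral_add_compl
        (fun x => (ENNReal.ofReal (1 / (1 + x)) * ENNReal.ofReal (Real.exp (-s * (1 + x)))))
        (measurableSet_Ici (a := (0:ℝ)))]
    have h0 : ∫⁻ x in (Set.Ici (0:ℝ))ᶜ,
        (ENNReal.ofReal (1 / (1 + x)) * ENNReal.ofReal (Real.exp (-s * (1 + x)))) ∂t = 0 := by
      rw [compl_Ici]
      exact setLIntegral_measure_zero _ _ ht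
    rw [h0, add_zero]
    apply setLIntegral_congr_fun measurableSet_Ici
    intro x hx; beta_reduce
    simp only [Set.mem_Ici] at hx
    have h1x : (0:ℝ) < 1 + x := by linarith
    rw [← ENNReal.ofReal_mul (div_nonneg zero_le_one h1x.le)]
    congr 1
    rw [one_div, ← div_eq_inv_mul]
  have hℓfin : ∀ s : ℝ, 0 < s → ∫⁻ x, ENNReal.ofReal (Real.exp (-s * x)) ∂m ≠ ⊤ := by
    intro s hs; rw [hℓ s hs]; exact hfin s hs
  -- m vanishes below 1
  have hm1 : m (Set.Iio 1) = 0 := by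
    rw [hm, Measure.map_apply haddm measurableSet_Iio]
    have hpre : (fun x : ℝ => 1 + x) ⁻¹' (Set.Iio 1) = Set.Iio 0 := by
      ext x; simp only [Set.mem_preimage, Set.mem_Iio]; constructor <;> intro h <;> linarith
    rw [hpre]
    exact withDensity_absolutelyContinuous t _ ht
  -- m is finite on Iio c
  have hmloc : ∀ c : ℝ, m (Set.Iio c) ≠ ⊤ := by
    intro c
    rw [hm, Measure.map_apply haddm measurableSet_Iio]
    have hpre : (fun x : ℝ => 1 + x) ⁻¹' (Set.Iio c) = Set.Iio (c - 1) := by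
      ext x; simp only [Set.mem_preimage, Set.mem_Iio]; constructor <;> intro h <;> linarith
    rw [hpre, withDensity_apply _ measurableSet_Iio]
    have hsub : Set.Iio (c - 1) ⊆ Set.Ico 0 (c - 1) ∪ Set.Iio 0 := by
      intro x hx
      rcases le_or_gt 0 x with h | h
      · exact Or.inl ⟨h, hx⟩
      · exact Or.inr h
    have hb : ∫⁻ x in Set.Iio (c - 1), ENNReal.ofReal (1 / (1 + x)) ∂t
        ≤ (∫⁻ x in Set.Ico 0 (c - 1), ENNReal.ofReal (1 / (1 + x)) ∂t)
          + ∫⁻ x in Set.Iio 0, ENNReal.ofReal (1 / (1 + x)) ∂t := by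
      refine le_trans (lintegral_mono_set hsub) (lintegral_union_le _ _ _)
    rw [setLIntegral_measure_zero _ _ ht, add_zero] at hb
    have hb2 : ∫⁻ x in Set.Ico 0 (c - 1), ENNReal.ofReal (1 / (1 + x)) ∂t
        ≤ ∫⁻ _ in Set.Ico 0 (c - 1), 1 ∂t := by
      apply setLIntegral_mono_ae measurable_const.aemeasurable
      filter_upwards with x hx
      have h1 : (1:ℝ) ≤ 1 + x := by linarith [hx.1]
      calc ENNReal.ofReal (1 / (1 + x)) ≤ ENNReal.ofReal 1 :=
            ENNReal.ofReal_le_ofReal (by rw [div_le_one (by linarith)]; exact h1)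
        _ = 1 := ENNReal.ofReal_one
    rw [setLIntegral_one] at hb2
    have hc : t (Set.Ico 0 (c - 1)) ≤ t (Set.Icc 0 (c - 1)) := measure_mono Set.Ico_subset_Icc_self
    exact ne_top_of_le_ne_top (lt_top_iff_ne_top.1 (isCompact_Icc.measure_lt_top)) (hb.trans (hb2.trans hc))
  -- Step B: Laplace transform of the law of Z
  have hZint : ∀ s : ℝ, 0 < s → Integrable (fun ω => Real.exp (-s * Z ω)) μ := by
    intro s hs
    apply Integrable.mono' (integrable_const (1 : ℝ))
      (((hZm.const_mul (-s)).exp).aestronglyMeasurable)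
    filter_upwards [hZ1] with ω hω
    rw [Real.norm_eq_abs, abs_of_pos (Real.exp_pos _)]
    apply Real.exp_le_one_iff.2
    nlinarith
  have hlawL : ∀ s : ℝ, 0 < s →
      ∫⁻ x, ENNReal.ofReal (Real.exp (-s * x)) ∂(Measure.map Z μ)
        = ENNReal.ofReal (1 - Real.exp
            (-(∫⁻ x, ENNReal.ofReal (Real.exp (-s * x)) ∂m).toReal)) := by
    intro s hs
    rw [lintegral_map (hexpm s) hZm,
      ← ofReal_integral_eq_lintegral_ofReal (hZint s hs)
        (Filter.Eventually.of_forall fun ω => (Real.exp_pos _).le),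
      hlap s hs, ← hℓ s hs]
  -- the two positive-part measures
  set ν₁ : Measure ℝ := Measure.map Z μ
      + Measure.sum (fun j : ℕ => (((2 * j + 2).factorial : ℝ≥0∞))⁻¹ • itconv m (2 * j + 1))
    with hν₁
  set ν₂ : Measure ℝ :=
      Measure.sum (fun j : ℕ => (((2 * j + 1).factorial : ℝ≥0∞))⁻¹ • itconv m (2 * j)) with hν₂
  have hLap₂ : ∀ s : ℝ, 0 < s →
      ∫⁻ x, ENNReal.ofReal (Real.exp (-s * x)) ∂ν₂
        = ENNReal.ofReal (∑' j : ℕ,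
            ((∫⁻ x, ENNReal.ofReal (Real.exp (-s * x)) ∂m).toReal) ^ (2 * j + 1)
              / ((2 * j + 1).factorial : ℝ)) := by
    intro s hs
    set r : ℝ := (∫⁻ x, ENNReal.ofReal (Real.exp (-s * x)) ∂m).toReal with hr
    have hrr : ENNReal.ofReal r = ∫⁻ x, ENNReal.ofReal (Real.exp (-s * x)) ∂m :=
      ENNReal.ofReal_toReal (hℓfin s hs)
    rw [hν₂, lintegral_sum_measure,
      ENNReal.ofReal_tsum_of_nonneg (fun j => by positivity) (sum_odd r)]
    apply tsum_congr; intro j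
    rw [lintegral_smul_measure, itconv_laplace, ← hrr, smul_eq_mul, term_ofReal r ENNReal.toReal_nonneg]
  have hLap₁ : ∀ s : ℝ, 0 < s →
      ∫⁻ x, ENNReal.ofReal (Real.exp (-s * x)) ∂ν₁
        = ENNReal.ofReal ((1 - Real.exp
            (-(∫⁻ x, ENNReal.ofReal (Real.exp (-s * x)) ∂m).toReal))
          + ∑' j : ℕ, ((∫⁻ x, ENNReal.ofReal (Real.exp (-s * x)) ∂m).toReal) ^ (2 * j + 2)
              / ((2 * j + 2).factorial : ℝ)) := by
    intro s hs
    set r : ℝ := (∫⁻ x, ENNReal.ofReal (Real.exp (-s * x)) ∂m).toReal with hr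
    have hrr : ENNReal.ofReal r = ∫⁻ x, ENNReal.ofReal (Real.exp (-s * x)) ∂m :=
      ENNReal.ofReal_toReal (hℓfin s hs)
    have h1e : 0 ≤ 1 - Real.exp (-r) := by
      have : Real.exp (-r) ≤ 1 := Real.exp_le_one_iff.2 (by simp [hr, ENNReal.toReal_nonneg])
      linarith
    rw [hν₁, lintegral_add_measure, lintegral_sum_measure, hlawL s hs,
      ENNReal.ofReal_add h1e (tsum_nonneg fun j => by positivity),
      ENNReal.ofReal_tsum_of_nonneg (fun j => by positivity) (sum_even2 r)]
    congr 1
    apply tsum_congr; intro j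
    rw [lintegral_smul_measure, itconv_laplace, ← hrr]
    have h21 : 2 * j + 1 + 1 = 2 * j + 2 := by ring
    rw [h21, smul_eq_mul, term_ofReal r ENNReal.toReal_nonneg]
  -- ν₁ and ν₂ vanish below 0
  have hmap0 : Measure.map Z μ (Set.Iio 0) = 0 := by
    rw [Measure.map_apply hZm measurableSet_Iio]
    apply measure_mono_null (t := {ω | ¬ 1 ≤ Z ω}) ?_ (ae_iff.1 hZ1)
    intro ω hω
    simp only [Set.mem_preimage, Set.mem_Iio] at hω
    simp only [Set.mem_setOf_eq, not_le]
    linarith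
  have hν₁0 : ν₁ (Set.Iio 0) = 0 := by
    rw [hν₁, Measure.add_apply, hmap0, Measure.sum_apply _ measurableSet_Iio]
    simp [Measure.smul_apply, itconv_null_zero hm1]
  have hν₂0 : ν₂ (Set.Iio 0) = 0 := by
    rw [hν₂, Measure.sum_apply _ measurableSet_Iio]
    simp [Measure.smul_apply, itconv_null_zero hm1]
  -- equal Laplace transforms
  have hνeq : ν₁ = ν₂ := by
    apply laplace_unique ν₁ ν₂ hν₁0 hν₂0
    · intro s hs
      rw [hLap₁ s hs, hLap₂ s hs, exp_series_split]
    · intro s hs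
      rw [hLap₁ s hs]
      exact ENNReal.ofReal_ne_top
  -- evaluate at A
  have hAeval : Measure.map Z μ A
      + ∑' j : ℕ, (((2 * j + 2).factorial : ℝ≥0∞))⁻¹ * itconv m (2 * j + 1) A
      = ∑' j : ℕ, (((2 * j + 1).factorial : ℝ≥0∞))⁻¹ * itconv m (2 * j) A := by
    have := congrArg (fun ν : Measure ℝ => ν A) hνeq
    simpa [hν₁, hν₂, Measure.add_apply, Measure.sum_apply _ hA, Measure.smul_apply,
      smul_eq_mul] using this
  -- boundedness: choose N with A ⊆ Iio N
  obtain ⟨R, hR⟩ := (Bornology.IsBounded.subset_ball_lt hAbdd 0 0)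
  obtain ⟨N, hN⟩ := exists_nat_ge R
  have hAN : A ⊆ Set.Iio (N : ℝ) := by
    intro x hx
    have := hR.2 hx
    rw [Metric.mem_ball, Real.dist_eq, sub_zero] at this
    exact lt_of_le_of_lt (le_abs_self x) (lt_of_lt_of_le this hN)
  have hnull : ∀ k : ℕ, N ≤ k → itconv m k A = 0 := by
    intro k hk
    apply measure_mono_null (hAN.trans (Set.Iio_subset_Iio ?_)) (itconv_null hm1 k)
    push_cast
    have : (N : ℝ) ≤ k := by exact_mod_cast hk
    linarith
  have hfinA : ∀ k : ℕ, itconv m k A ≠ ⊤ := by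
    intro k
    apply ne_top_of_le_ne_top (ENNReal.pow_ne_top (hmloc N)) 
    exact le_trans (measure_mono hAN) (itconv_bound hm1 k N)
  -- finite sums
  haveI : IsProbabilityMeasure (Measure.map Z μ) := Measure.isProbabilityMeasure_map hZm.aemeasurable
  have hPfin : Measure.map Z μ A ≠ ⊤ := measure_ne_top _ _
  have hBfin : ∀ j : ℕ, (((2 * j + 2).factorial : ℝ≥0∞))⁻¹ * itconv m (2 * j + 1) A ≠ ⊤ :=
    fun j => ENNReal.mul_ne_top
      (ENNReal.inv_ne_top.2 (by exact_mod_cast (Nat.factorial_pos _).ne')) (hfinA _)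
  have hAfin' : ∀ j : ℕ, (((2 * j + 1).factorial : ℝ≥0∞))⁻¹ * itconv m (2 * j) A ≠ ⊤ :=
    fun j => ENNReal.mul_ne_top
      (ENNReal.inv_ne_top.2 (by exact_mod_cast (Nat.factorial_pos _).ne')) (hfinA _)
  have hS₁ : ∑' j : ℕ, (((2 * j + 2).factorial : ℝ≥0∞))⁻¹ * itconv m (2 * j + 1) A
      = ∑ j ∈ Finset.range N, (((2 * j + 2).factorial : ℝ≥0∞))⁻¹ * itconv m (2 * j + 1) A := by
    apply tsum_eq_sum
    intro j hj
    rw [hnull (2 * j + 1) (by simp only [Finset.mem_range, not_lt] at hj; omega), mul_zero]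
  have hS₂ : ∑' j : ℕ, (((2 * j + 1).factorial : ℝ≥0∞))⁻¹ * itconv m (2 * j) A
      = ∑ j ∈ Finset.range N, (((2 * j + 1).factorial : ℝ≥0∞))⁻¹ * itconv m (2 * j) A := by
    apply tsum_eq_sum
    intro j hj
    rw [hnull (2 * j) (by simp only [Finset.mem_range, not_lt] at hj; omega), mul_zero]
  rw [hS₁, hS₂] at hAeval
  have hEq := congrArg ENNReal.toReal hAeval
  rw [ENNReal.toReal_add hPfin (by
      rw [← lt_top_iff_ne_top]
      apply ENNReal.sum_lt_top.2
      intro j _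
      exact lt_top_iff_ne_top.2 (hBfin j)),
    ENNReal.toReal_sum (fun j _ => hBfin j), ENNReal.toReal_sum (fun j _ => hAfin' j)] at hEq
  simp only [ENNReal.toReal_mul, ENNReal.toReal_inv, ENNReal.toReal_natCast] at hEq
  -- target series
  have hf0 : ∀ k : ℕ, N ≤ k →
      ((-1 : ℝ) ^ k / ((k + 1).factorial : ℝ)) * ((itconv m k) A).toReal = 0 := by
    intro k hk
    rw [hnull k hk]
    simp
  have hse : Summable (fun j : ℕ =>
      ((-1 : ℝ) ^ (2 * j) / ((2 * j + 1).factorial : ℝ)) * ((itconv m (2 * j)) A).toReal) :=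
    summable_of_ne_finset_zero (s := Finset.range N)
      (fun j hj => hf0 (2 * j) (by simp only [Finset.mem_range, not_lt] at hj; omega))
  have hso : Summable (fun j : ℕ =>
      ((-1 : ℝ) ^ (2 * j + 1) / ((2 * j + 1 + 1).factorial : ℝ))
        * ((itconv m (2 * j + 1)) A).toReal) :=
    summable_of_ne_finset_zero (s := Finset.range N)
      (fun j hj => hf0 (2 * j + 1) (by simp only [Finset.mem_range, not_lt] at hj; omega))
  rw [← tsum_even_add_odd
    (f := fun k : ℕ => ((-1 : ℝ) ^ k / ((k + 1).factorial : ℝ)) * ((itconv m k) A).toReal)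
    hse hso]
  have he : ∑' j : ℕ, ((-1 : ℝ) ^ (2 * j) / ((2 * j + 1).factorial : ℝ))
        * ((itconv m (2 * j)) A).toReal
      = ∑ j ∈ Finset.range N, (((2 * j + 1).factorial : ℝ))⁻¹ * ((itconv m (2 * j)) A).toReal := by
    rw [tsum_eq_sum (s := Finset.range N)
      (fun j hj => hf0 (2 * j) (by simp only [Finset.mem_range, not_lt] at hj; omega))]
    apply Finset.sum_congr rfl
    intro j _
    rw [Even.neg_one_pow (even_two_mul j), one_div]
  have hoo : ∑' j : ℕ, ((-1 : ℝ) ^ (2 * j + 1) / ((2 * j + 1 + 1).factorial : ℝ))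
        * ((itconv m (2 * j + 1)) A).toReal
      = -∑ j ∈ Finset.range N,
          (((2 * j + 2).factorial : ℝ))⁻¹ * ((itconv m (2 * j + 1)) A).toReal := by
    rw [tsum_eq_sum (s := Finset.range N)
      (fun j hj => hf0 (2 * j + 1) (by simp only [Finset.mem_range, not_lt] at hj; omega)),
      ← Finset.sum_neg_distrib]
    apply Finset.sum_congr rfl
    intro j _
    have h21 : 2 * j + 1 + 1 = 2 * j + 2 := by ring
    rw [Odd.neg_one_pow ⟨j, by ring⟩, h21, neg_div, one_div, neg_mul]
  rw [he, hoo]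
  linarith
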